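/- arXiv:0712.1032 — 2 statements merged into one kernel-verified Lean document; each statement's English description precedes it below -/
import Mathlib

section
/- For every integer n ≥ 1 there exists a unique monic polynomial P of degree n with complex coefficients such that the formal Laurent series q^{-n} − P(f(q)) lies in q·ℂ[[q]], i.e. all of its coefficients in degrees ≤ 0 vanish. (This polynomial is the n-th Faber polynomial P_{n,f} of f.) -/
open HahnSeries Polynomial Finset

private lemma faber_pow_coeff (f : LaurentSeries ℂ)
    (hf_lead : f.coeff (-1) = 1)
    (hf_neg : ∀ m : ℤ, m < -1 → f.coeff m = 0) :
    ∀ k : ℕ, (f ^ k).coeff (-(k:ℤ)) = 1 ∧ ∀ m : ℤ, m < -(k:ℤ) → (f ^ k).coeff m = 0 := by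
  have hf0 : f ≠ 0 := by
    intro h; rw [h] at hf_lead; simp at hf_lead
  have hord : f.order = -1 := by
    have h1 : f.order ≤ -1 :=
      HahnSeries.order_le_of_coeff_ne_zero (by rw [hf_lead]; exact one_ne_zero)
    rcases lt_or_eq_of_le h1 with h | h
    · exact absurd (hf_neg f.order h) (HahnSeries.coeff_order_eq_zero.not.mpr hf0)
    · exact h
  have hlead : f.leadingCoeff = 1 := by
    rw [HahnSeries.leadingCoeff_eq, hord, hf_lead]
  have hleadk : ∀ k : ℕ, (f ^ k).leadingCoeff = 1 := by
    intro k
    induction k with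
    | zero => simp [HahnSeries.leadingCoeff_one]
    | succ k ih =>
      have h1 := HahnSeries.coeff_mul_order_add_order (f ^ k) f
      have h2 : (f ^ (k+1)).order = (f ^ k).order + f.order := by
        rw [pow_succ]; exact HahnSeries.order_mul (pow_ne_zero _ hf0) hf0
      rw [← pow_succ] at h1
      rw [HahnSeries.leadingCoeff_eq, h2, h1, ih, hlead, one_mul]
  intro k
  have hordk : (f ^ k).order = -(k:ℤ) := by
    rw [HahnSeries.order_pow, hord]; simp
  refine ⟨?_, fun m hm => HahnSeries.coeff_eq_zero_of_lt_order (by rw [hordk]; exact hm)⟩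
  have := hleadk k
  rwa [HahnSeries.leadingCoeff_eq, hordk] at this

private lemma faber_hahn_sum_coeff {α : Type*} (s : Finset α) (F : α → LaurentSeries ℂ) (m : ℤ) :
    (∑ i ∈ s, F i).coeff m = ∑ i ∈ s, (F i).coeff m :=
  map_sum (HahnSeries.coeff.addMonoidHom m) F s

private lemma faber_algebraMap_eq (c : ℂ) :
    (algebraMap ℂ (LaurentSeries ℂ) c) = HahnSeries.single (0:ℤ) c := by
  rw [HahnSeries.algebraMap_apply', PowerSeries.algebraMap_apply, Algebra.algebraMap_self_apply]
  simp [HahnSeries.ofPowerSeries_C]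

private lemma faber_algC_mul_coeff (c : ℂ) (x : LaurentSeries ℂ) (m : ℤ) :
    ((algebraMap ℂ (LaurentSeries ℂ) c) * x).coeff m = c * x.coeff m := by
  rw [faber_algebraMap_eq]
  exact HahnSeries.coeff_single_zero_mul

private lemma faber_aeval_coeff (f : LaurentSeries ℂ) (P : Polynomial ℂ) (m : ℤ) :
    (Polynomial.aeval f P).coeff m
      = ∑ i ∈ Finset.range (P.natDegree + 1), P.coeff i * (f ^ i).coeff m := by
  rw [Polynomial.aeval_eq_sum_range, faber_hahn_sum_coeff]
  refine Finset.sum_congr rfl fun i _ => ?_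
  rw [Algebra.smul_def]
  exact faber_algC_mul_coeff _ _ _

private lemma faber_aeval_lead (f : LaurentSeries ℂ)
    (hf_lead : f.coeff (-1) = 1)
    (hf_neg : ∀ m : ℤ, m < -1 → f.coeff m = 0)
    (R : Polynomial ℂ) :
    (Polynomial.aeval f R).coeff (-(R.natDegree : ℤ)) = R.leadingCoeff := by
  rw [faber_aeval_coeff]
  rw [Finset.sum_eq_single R.natDegree]
  · rw [(faber_pow_coeff f hf_lead hf_neg R.natDegree).1, mul_one, Polynomial.leadingCoeff]
  · intro i hi hne
    have hi' : i < R.natDegree := lt_of_le_of_ne (Nat.lt_succ_iff.mp (Finset.mem_range.mp hi)) hne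
    rw [(faber_pow_coeff f hf_lead hf_neg i).2 _
      (by exact_mod_cast neg_lt_neg (Int.ofNat_lt.mpr hi')), mul_zero]
  · intro h; exact absurd (Finset.self_mem_range_succ _) h

private lemma faber_exists (f : LaurentSeries ℂ)
    (hf_lead : f.coeff (-1) = 1)
    (hf_neg : ∀ m : ℤ, m < -1 → f.coeff m = 0) :
    ∀ n : ℕ, ∃ P : Polynomial ℂ, P.Monic ∧ P.natDegree = n ∧
      ∀ m : ℤ, m ≤ 0 →
        ((HahnSeries.single (-(n : ℤ)) (1 : ℂ) : LaurentSeries ℂ)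
          - Polynomial.aeval f P).coeff m = 0 := by
  intro n
  induction n using Nat.strong_induction_on with
  | _ n ih =>
  choose Q hQmon hQdeg hQcoeff using fun (j : ℕ) (hj : j < n) => ih j hj
  set E : LaurentSeries ℂ := (HahnSeries.single (-(n : ℤ)) (1 : ℂ)) - f ^ n with hE
  set P : Polynomial ℂ :=
    Polynomial.X ^ n + ∑ j ∈ Finset.range n,
      Polynomial.C (E.coeff (-(j:ℤ))) * (if h : j < n then Q j h else 0) with hP
  have hpow := faber_pow_coeff f hf_lead hf_neg
  have hdeglt : (∑ j ∈ Finset.range n,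
      Polynomial.C (E.coeff (-(j:ℤ))) * (if h : j < n then Q j h else 0)).degree
        < (Polynomial.X ^ n : Polynomial ℂ).degree := by
    rw [Polynomial.degree_X_pow]
    refine lt_of_le_of_lt (Polynomial.degree_sum_le _ _) ?_
    rw [Finset.sup_lt_iff (by exact_mod_cast WithBot.bot_lt_coe n)]
    intro j hj
    rw [Finset.mem_range] at hj
    refine lt_of_le_of_lt (Polynomial.degree_mul_le _ _) ?_
    rw [dif_pos hj]
    calc Polynomial.degree (Polynomial.C (E.coeff (-(j:ℤ)))) + (Q j hj).degree
        ≤ 0 + (Q j hj).degree := add_le_add_left Polynomial.degree_C_le _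
      _ = (Q j hj).degree := zero_add _
      _ ≤ (j : ℕ) := Polynomial.degree_le_natDegree.trans (by rw [hQdeg])
      _ < (n : WithBot ℕ) := by exact_mod_cast hj
  have hmon : P.Monic := (Polynomial.monic_X_pow n).add_of_left hdeglt
  have hdeg : P.natDegree = n := by
    have h := Polynomial.degree_add_eq_left_of_degree_lt hdeglt
    rw [hP, Polynomial.natDegree, h, Polynomial.degree_X_pow]
    rfl
  refine ⟨P, hmon, hdeg, ?_⟩
  intro m hm
  have haev : (Polynomial.aeval f P) = f ^ n + ∑ j ∈ Finset.range n,
      (algebraMap ℂ (LaurentSeries ℂ) (E.coeff (-(j:ℤ))))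
        * (Polynomial.aeval f (if h : j < n then Q j h else 0)) := by
    rw [hP, map_add, map_pow, Polynomial.aeval_X, map_sum]
    exact congrArg _ (Finset.sum_congr rfl fun j _ => by rw [map_mul, Polynomial.aeval_C])
  rw [HahnSeries.coeff_sub, haev, HahnSeries.coeff_add, faber_hahn_sum_coeff]
  have hterm : ∀ j ∈ Finset.range n,
      ((algebraMap ℂ (LaurentSeries ℂ) (E.coeff (-(j:ℤ))))
        * (Polynomial.aeval f (if h : j < n then Q j h else 0))).coeff m
      = E.coeff (-(j:ℤ)) * ((HahnSeries.single (-(j:ℤ)) (1:ℂ) : LaurentSeries ℂ).coeff m) := by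
    intro j hj
    rw [Finset.mem_range] at hj
    rw [dif_pos hj, faber_algC_mul_coeff]
    have h1 := hQcoeff j hj m hm
    rw [HahnSeries.coeff_sub, sub_eq_zero] at h1
    rw [← h1]
  rw [Finset.sum_congr rfl hterm]
  by_cases hcase : -(n:ℤ) < m
  · set j₀ : ℕ := (-m).toNat with hj₀
    have hm' : m = -(j₀:ℤ) := by
      rw [hj₀, Int.toNat_of_nonneg (by omega)]; ring
    have hj₀n : j₀ < n := by omega
    have hsum : ∑ j ∈ Finset.range n,
        E.coeff (-(j:ℤ)) * ((HahnSeries.single (-(j:ℤ)) (1:ℂ) : LaurentSeries ℂ).coeff m)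
        = E.coeff m := by
      rw [Finset.sum_eq_single j₀]
      · rw [← hm', hm', HahnSeries.coeff_single_same, mul_one, ← hm']
      · intro j hj hne
        rw [HahnSeries.coeff_single_of_ne (fun hc => hne (by omega)), mul_zero]
      · intro h; exact absurd (Finset.mem_range.mpr hj₀n) h
    rw [hsum, hE, HahnSeries.coeff_sub]
    ring
  · push_neg at hcase
    have hsum : ∑ j ∈ Finset.range n,
        E.coeff (-(j:ℤ)) * ((HahnSeries.single (-(j:ℤ)) (1:ℂ) : LaurentSeries ℂ).coeff m)
        = 0 := by
      refine Finset.sum_eq_zero fun j hj => ?_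
      rw [Finset.mem_range] at hj
      rw [HahnSeries.coeff_single_of_ne (by omega), mul_zero]
    rw [hsum, add_zero, sub_eq_zero]
    rcases eq_or_lt_of_le hcase with h | h
    · rw [h, HahnSeries.coeff_single_same, (hpow n).1]
    · rw [HahnSeries.coeff_single_of_ne (by omega), (hpow n).2 m h]

/-- **Existence and uniqueness of Faber polynomials.**
Let `f = q⁻¹ + ∑_{k ≥ 1} a_k q^k ∈ ℂ((q))` be a formal Laurent series with leading term `q⁻¹`
and no constant term.  For every `n ≥ 1` there is a unique monic polynomial `P` of degree `n`
with complex coefficients such that `q⁻ⁿ - P(f(q))` lies in `q·ℂ[[q]]`, i.e. all of its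
coefficients in degrees `≤ 0` vanish. -/
theorem faber_polynomial_exists_unique
    (f : LaurentSeries ℂ)
    (hf_lead : f.coeff (-1) = 1)
    (hf_const : f.coeff 0 = 0)
    (hf_neg : ∀ m : ℤ, m < -1 → f.coeff m = 0)
    (n : ℕ) (hn : 1 ≤ n) :
    ∃! P : Polynomial ℂ, P.Monic ∧ P.natDegree = n ∧
      ∀ m : ℤ, m ≤ 0 →
        ((HahnSeries.single (-(n : ℤ)) (1 : ℂ) : LaurentSeries ℂ)
          - Polynomial.aeval f P).coeff m = 0 := by
  obtain ⟨P, hP⟩ := faber_exists f hf_lead hf_neg n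
  refine ⟨P, hP, ?_⟩
  rintro Q ⟨hQmon, hQdeg, hQcoeff⟩
  obtain ⟨hPmon, hPdeg, hPcoeff⟩ := hP
  by_contra hne
  set R : Polynomial ℂ := Q - P with hR
  have hR0 : R ≠ 0 := sub_ne_zero.mpr hne
  have hRcoeff : ∀ m : ℤ, m ≤ 0 → (Polynomial.aeval f R).coeff m = 0 := by
    intro m hm
    have h1 := hQcoeff m hm
    have h2 := hPcoeff m hm
    rw [HahnSeries.coeff_sub, sub_eq_zero] at h1 h2
    rw [hR, map_sub, HahnSeries.coeff_sub, ← h1, ← h2, sub_self]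
  have h := faber_aeval_lead f hf_lead hf_neg R
  rw [hRcoeff _ (by omega)] at h
  exact hR0 (Polynomial.leadingCoeff_eq_zero.mp h.symm)
end

section
/- Write P_{n,f}(f(q)) = q^{-n} + ∑_{m≥1} c_{n,m} q^m in ℂ((q)) (there is no constant term and no other negative terms). Then the coefficients satisfy the symmetry m · c_{n,m} = n · c_{m,n} for all m, n ≥ 1. -/
open HahnSeries Polynomial

/-- The operator `ϑ = q d/dq` on Laurent series. -/
noncomputable def thetaFun (f : LaurentSeries ℂ) : LaurentSeries ℂ :=
  ⟨fun n => (n : ℂ) * f.coeff n, f.isPWO_support'.mono (fun n hn => by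
    simp only [Function.mem_support, ne_eq] at hn ⊢
    exact fun h => hn (by rw [h, mul_zero]))⟩

@[simp] lemma thetaFun_coeff (f : LaurentSeries ℂ) (n : ℤ) :
    (thetaFun f).coeff n = (n : ℂ) * f.coeff n := rfl

lemma thetaFun_support (f : LaurentSeries ℂ) : (thetaFun f).support ⊆ f.support := by
  intro n hn
  simp only [HahnSeries.mem_support, thetaFun_coeff, ne_eq] at hn ⊢
  exact right_ne_zero_of_mul hn

lemma thetaFun_add (a b : LaurentSeries ℂ) :
    thetaFun (a + b) = thetaFun a + thetaFun b := by
  ext n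
  simp only [thetaFun_coeff, HahnSeries.coeff_add]
  ring

lemma thetaFun_smul (c : ℂ) (a : LaurentSeries ℂ) :
    thetaFun (c • a) = c • thetaFun a := by
  ext n
  simp only [thetaFun_coeff, HahnSeries.coeff_smul, smul_eq_mul]
  ring

lemma thetaFun_single (a : ℤ) (r : ℂ) :
    thetaFun (HahnSeries.single a r) = HahnSeries.single a ((a : ℂ) * r) := by
  ext k
  rcases eq_or_ne k a with rfl | h
  · rw [thetaFun_coeff, HahnSeries.coeff_single_same, HahnSeries.coeff_single_same]
  · rw [thetaFun_coeff, HahnSeries.coeff_single_of_ne h, HahnSeries.coeff_single_of_ne h,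
      mul_zero]

/-- Leibniz rule for `ϑ`. -/
lemma thetaFun_mul (a b : LaurentSeries ℂ) :
    thetaFun (a * b) = a * thetaFun b + thetaFun a * b := by
  ext n
  rw [HahnSeries.coeff_add,
    HahnSeries.coeff_mul_right' b.isPWO_support (thetaFun_support b),
    HahnSeries.coeff_mul_left' a.isPWO_support (thetaFun_support a),
    thetaFun_coeff, HahnSeries.coeff_mul, Finset.mul_sum, ← Finset.sum_add_distrib]
  refine Finset.sum_congr rfl fun ij hij => ?_
  rw [Finset.mem_addAntidiagonal] at hij
  rw [thetaFun_coeff, thetaFun_coeff, ← hij.2.2]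
  push_cast
  ring

lemma thetaFun_algebraMap (c : ℂ) :
    thetaFun (algebraMap ℂ (LaurentSeries ℂ) c) = 0 := by
  have h : algebraMap ℂ (LaurentSeries ℂ) c = HahnSeries.single (0 : ℤ) c := by
    rw [HahnSeries.algebraMap_apply', PowerSeries.algebraMap_apply, Algebra.algebraMap_self, RingHom.id_apply,
      HahnSeries.ofPowerSeries_C, HahnSeries.C_apply]
  rw [h, thetaFun_single]
  simp

lemma thetaFun_pow (x : LaurentSeries ℂ) (k : ℕ) :
    thetaFun (x ^ (k + 1)) = ((k + 1 : ℕ) : LaurentSeries ℂ) * (x ^ k * thetaFun x) := by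
  induction k with
  | zero => simp
  | succ k ih =>
    rw [pow_succ, thetaFun_mul, ih]
    have h : x ^ k * thetaFun x * x = x ^ (k + 1) * thetaFun x := by ring
    rw [mul_assoc, h]
    push_cast
    ring

/-- Chain rule for `ϑ`. -/
lemma thetaFun_aeval (x : LaurentSeries ℂ) (p : Polynomial ℂ) :
    thetaFun (Polynomial.aeval x p)
      = Polynomial.aeval x (Polynomial.derivative p) * thetaFun x := by
  induction p using Polynomial.induction_on with
  | C a => simp [thetaFun_algebraMap]
  | add p q hp hq => rw [map_add, thetaFun_add, hp, hq, map_add, map_add]; ring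
  | monomial k a ih =>
    rw [Polynomial.derivative_C_mul_X_pow, Nat.add_sub_cancel]
    rw [map_mul, map_mul, Polynomial.aeval_C, Polynomial.aeval_X_pow, Polynomial.aeval_C,
      Polynomial.aeval_X_pow, thetaFun_mul, thetaFun_algebraMap, thetaFun_pow,
      map_mul, map_natCast]
    ring

/-- A formal antiderivative of a complex polynomial. -/
noncomputable def antider (p : Polynomial ℂ) : Polynomial ℂ :=
  p.sum fun k c => Polynomial.C (c / ((k + 1 : ℕ) : ℂ)) * Polynomial.X ^ (k + 1)

lemma derivative_antider (p : Polynomial ℂ) : (antider p).derivative = p := by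
  unfold antider
  rw [Polynomial.sum, map_sum]
  conv_rhs => rw [← Polynomial.sum_C_mul_X_pow_eq p, Polynomial.sum]
  refine Finset.sum_congr rfl fun k _ => ?_
  have hk : ((k + 1 : ℕ) : ℂ) ≠ 0 := Nat.cast_ne_zero.mpr k.succ_ne_zero
  rw [Polynomial.derivative_C_mul_X_pow, Nat.add_sub_cancel, div_mul_cancel₀ _ hk]

/-- Key residue-type identity: the constant coefficient of `ϑ(p(f)) · q(f)` vanishes. -/
lemma thetaFun_aeval_mul_aeval_coeff_zero (f : LaurentSeries ℂ) (p q : Polynomial ℂ) :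
    (thetaFun (Polynomial.aeval f p) * Polynomial.aeval f q).coeff 0 = 0 := by
  have h1 : thetaFun (Polynomial.aeval f p) * Polynomial.aeval f q
      = thetaFun (Polynomial.aeval f (antider (p.derivative * q))) := by
    rw [thetaFun_aeval, thetaFun_aeval, derivative_antider, map_mul]
    ring
  rw [h1, thetaFun_coeff]
  simp

/-- **Symmetry of the Faber polynomial coefficients.**
Let `f = q⁻¹ + ∑_{k ≥ 1} a_k q^k ∈ ℂ((q))`, with `n`-th Faber polynomial `P n` for `n ≥ 1`.
Writing `P_{n,f}(f(q)) = q⁻ⁿ + ∑_{m ≥ 1} c_{n,m} q^m` (there is no constant term and no other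
negative term), the coefficients satisfy `m·c_{n,m} = n·c_{m,n}` for all `m, n ≥ 1`. -/
theorem faber_coefficient_symmetry
    (f : LaurentSeries ℂ)
    (hf_lead : f.coeff (-1) = 1)
    (hf_const : f.coeff 0 = 0)
    (hf_neg : ∀ m : ℤ, m < -1 → f.coeff m = 0)
    (P : ℕ → Polynomial ℂ)
    (hP : ∀ n : ℕ, 1 ≤ n → (P n).Monic ∧ (P n).natDegree = n ∧
      ∀ m : ℤ, m ≤ 0 →
        ((HahnSeries.single (-(n : ℤ)) (1 : ℂ) : LaurentSeries ℂ)
          - Polynomial.aeval f (P n)).coeff m = 0) :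
    (∀ n : ℕ, 1 ≤ n →
      (Polynomial.aeval f (P n)).coeff (-(n : ℤ)) = 1 ∧
      ∀ m : ℤ, m ≤ 0 → m ≠ -(n : ℤ) → (Polynomial.aeval f (P n)).coeff m = 0) ∧
    (∀ m n : ℕ, 1 ≤ m → 1 ≤ n →
      (m : ℂ) * (Polynomial.aeval f (P n)).coeff (m : ℤ)
        = (n : ℂ) * (Polynomial.aeval f (P m)).coeff (n : ℤ)) := by
  have key : ∀ n : ℕ, 1 ≤ n → ∀ m : ℤ, m ≤ 0 →
      (Polynomial.aeval f (P n)).coeff m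
        = (HahnSeries.single (-(n : ℤ)) (1 : ℂ) : LaurentSeries ℂ).coeff m := by
    intro n hn m hm
    have := (hP n hn).2.2 m hm
    rw [HahnSeries.coeff_sub, sub_eq_zero] at this
    exact this.symm
  constructor
  · intro n hn
    constructor
    · rw [key n hn _ (by omega), HahnSeries.coeff_single_same]
    · intro m hm hne
      rw [key n hn m hm, HahnSeries.coeff_single_of_ne hne]
  · intro m n hm hn
    set F : ℕ → LaurentSeries ℂ := fun k => Polynomial.aeval f (P k) with hF
    set g : ℕ → LaurentSeries ℂ :=
      fun k => F k - HahnSeries.single (-(k : ℤ)) (1 : ℂ) with hg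
    have hgcoeff : ∀ k : ℕ, 1 ≤ k → ∀ j : ℤ, j ≤ 0 → (g k).coeff j = 0 := by
      intro k hk j hj
      rw [hg]
      simp only [HahnSeries.coeff_sub]
      rw [key k hk j hj, sub_self]
    have hgpos : ∀ k : ℕ, 1 ≤ k → ∀ j : ℤ, 1 ≤ j → (g k).coeff j = (F k).coeff j := by
      intro k hk j hj
      rw [hg]
      simp only [HahnSeries.coeff_sub]
      rw [HahnSeries.coeff_single_of_ne (by omega), sub_zero]
    have hsplit : ∀ k : ℕ, F k = HahnSeries.single (-(k : ℤ)) (1 : ℂ) + g k := by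
      intro k; rw [hg]; ring
    have main : (thetaFun (F n) * F m).coeff 0 = 0 :=
      thetaFun_aeval_mul_aeval_coeff_zero f (P n) (P m)
    rw [hsplit n, hsplit m, thetaFun_add, thetaFun_single, add_mul, mul_add, mul_add,
      HahnSeries.coeff_add, HahnSeries.coeff_add, HahnSeries.coeff_add] at main
    have hA : ((HahnSeries.single (-(n : ℤ)) (((-(n : ℤ) : ℤ) : ℂ) * 1) : LaurentSeries ℂ)
        * HahnSeries.single (-(m : ℤ)) (1 : ℂ)).coeff 0 = 0 := by
      rw [HahnSeries.single_mul_single, HahnSeries.coeff_single_of_ne (by omega)]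
    have hB : ((HahnSeries.single (-(n : ℤ)) (((-(n : ℤ) : ℤ) : ℂ) * 1) : LaurentSeries ℂ)
        * g m).coeff 0 = -(n : ℂ) * (g m).coeff (n : ℤ) := by
      have h0 : (0 : ℤ) = (n : ℤ) + (-(n : ℤ)) := by omega
      rw [h0, HahnSeries.coeff_single_mul_add]
      push_cast
      ring
    have hC : (thetaFun (g n) * HahnSeries.single (-(m : ℤ)) (1 : ℂ)).coeff 0
        = (m : ℂ) * (g n).coeff (m : ℤ) := by
      have h0 : (0 : ℤ) = (m : ℤ) + (-(m : ℤ)) := by omega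
      rw [h0, HahnSeries.coeff_mul_single_add, thetaFun_coeff, mul_one]
      norm_cast
    have hD : (thetaFun (g n) * g m).coeff 0 = 0 := by
      rw [HahnSeries.coeff_mul]
      refine Finset.sum_eq_zero fun ij hij => ?_
      rw [Finset.mem_addAntidiagonal] at hij
      rcases le_or_gt ij.1 0 with h1 | h1
      · rw [thetaFun_coeff, hgcoeff n hn ij.1 h1, mul_zero, zero_mul]
      · rw [hgcoeff m hm ij.2 (by omega), mul_zero]
    rw [hA, hB, hC, hD] at main
    have main2 : (m : ℂ) * (g n).coeff (m : ℤ) = (n : ℂ) * (g m).coeff (n : ℤ) := by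
      linear_combination main
    rw [hgpos n hn (m : ℤ) (by exact_mod_cast hm), hgpos m hm (n : ℤ) (by exact_mod_cast hn)]
      at main2
    exact main2
end
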